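/- Let V = ℂ³ with basis e₁, e₂, e₃ and let D₋, D₊ be the derivations of the tensor algebra determined on V by D₋(e₁) = e₂ − i e₃, D₋(e₂) = e₁, D₋(e₃) = −i e₁, and D₊(e₁) = e₂ + i e₃, D₊(e₂) = e₁, D₊(e₃) = i e₁. For 1 ≤ j ≤ b and 1 ≤ k ≤ b−1, let A_{jk} : V^{⊗(b−2)} → V^{⊗b} be the map inserting the tensor θ = e₁⊗e₁ − e₂⊗e₂ − e₃⊗e₃ at the appropriate pair of positions (at the (j, k+1)-th spots if j ≤ k, and the (k, j)-th spots if k < j). Then D₊(D₋(e₁^{⊗b})) = b(b+1)·e₁^{⊗b} − Σ_{j=1}^{b} Σ_{k=1}^{b−1} A_{jk}(e₁^{⊗(b−2)}). -/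

import Mathlib

open scoped TensorProduct

/-- The basis vectors `e₁, e₂, e₃` of `V = ℂ³` (0-indexed). -/
noncomputable def eV3 (s : Fin 3) : Fin 3 → ℂ := Pi.single s 1

/-- `D₋ : V → V`, with `D₋(e₁) = e₂ − i e₃`, `D₋(e₂) = e₁`, `D₋(e₃) = −i e₁`. -/
noncomputable def dMinusV3 : (Fin 3 → ℂ) →ₗ[ℂ] (Fin 3 → ℂ) :=
  Matrix.toLin' !![0, 1, -Complex.I; 1, 0, 0; -Complex.I, 0, 0]

/-- `D₊ : V → V`, with `D₊(e₁) = e₂ + i e₃`, `D₊(e₂) = e₁`, `D₊(e₃) = i e₁`. -/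
noncomputable def dPlusV3 : (Fin 3 → ℂ) →ₗ[ℂ] (Fin 3 → ℂ) :=
  Matrix.toLin' !![0, 1, Complex.I; 1, 0, 0; Complex.I, 0, 0]

/-- The derivation of `V^{⊗b}` determined by a linear endomorphism `d` of `V`
(Leibniz rule: the sum of `d` acting in each tensor factor). -/
noncomputable def derivExt (b : ℕ) (d : (Fin 3 → ℂ) →ₗ[ℂ] (Fin 3 → ℂ)) :
    (⨂[ℂ] _ : Fin b, (Fin 3 → ℂ)) →ₗ[ℂ] ⨂[ℂ] _ : Fin b, (Fin 3 → ℂ) :=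
  ∑ j : Fin b,
    PiTensorProduct.map
      (Function.update (fun _ : Fin b => (LinearMap.id : (Fin 3 → ℂ) →ₗ[ℂ] Fin 3 → ℂ)) j d)

/-- The tensor with `e₁` in every slot except the (0-indexed) positions `p` and `q`,
where the tensor `θ = e₁⊗e₁ − e₂⊗e₂ − e₃⊗e₃` (dual to the signature-(1,2) form) is
inserted; i.e. the value `A_{jk}(e₁^{⊗(b−2)})` of the insertion operator. -/
noncomputable def insertTheta (b : ℕ) (p q : ℕ) : ⨂[ℂ] _ : Fin b, (Fin 3 → ℂ) :=
  (⨂ₜ[ℂ] i : Fin b, if (i : ℕ) = p ∨ (i : ℕ) = q then eV3 0 else eV3 0) -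
    (⨂ₜ[ℂ] i : Fin b, if (i : ℕ) = p ∨ (i : ℕ) = q then eV3 1 else eV3 0) -
    (⨂ₜ[ℂ] i : Fin b, if (i : ℕ) = p ∨ (i : ℕ) = q then eV3 2 else eV3 0)

lemma dMinus_e0 : dMinusV3 (eV3 0) = eV3 1 - Complex.I • eV3 2 := by
  funext x
  fin_cases x <;>
    simp [dMinusV3, eV3, Matrix.toLin'_apply, Matrix.mulVec, dotProduct,
      Fin.sum_univ_three, Pi.single]

lemma dPlus_e0 : dPlusV3 (eV3 0) = eV3 1 + Complex.I • eV3 2 := by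
  funext x
  fin_cases x <;>
    simp [dPlusV3, eV3, Matrix.toLin'_apply, Matrix.mulVec, dotProduct,
      Fin.sum_univ_three, Pi.single]

lemma dPlus_e1 : dPlusV3 (eV3 1) = eV3 0 := by
  funext x
  fin_cases x <;>
    simp [dPlusV3, eV3, Matrix.toLin'_apply, Matrix.mulVec, dotProduct,
      Fin.sum_univ_three, Pi.single]

lemma dPlus_e2 : dPlusV3 (eV3 2) = Complex.I • eV3 0 := by
  funext x
  fin_cases x <;>
    simp [dPlusV3, eV3, Matrix.toLin'_apply, Matrix.mulVec, dotProduct,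
      Fin.sum_univ_three, Pi.single]

lemma dPlus_m : dPlusV3 (eV3 1 - Complex.I • eV3 2) = (2 : ℂ) • eV3 0 := by
  rw [map_sub, map_smul, dPlus_e1, dPlus_e2, smul_smul, Complex.I_mul_I]
  module

lemma derivExt_tprod (b : ℕ) (d : (Fin 3 → ℂ) →ₗ[ℂ] (Fin 3 → ℂ)) (f : Fin b → (Fin 3 → ℂ)) :
    derivExt b d (PiTensorProduct.tprod ℂ f)
      = ∑ j : Fin b, PiTensorProduct.tprod ℂ (Function.update f j (d (f j))) := by
  simp only [derivExt, LinearMap.sum_apply, PiTensorProduct.map_tprod]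
  refine Finset.sum_congr rfl fun j _ => ?_
  congr 1
  funext i
  rcases eq_or_ne i j with rfl | h
  · simp
  · simp [Function.update_of_ne h]

/-- The tensor with `eV3 s` at the (0-indexed) positions `p`, `q` and `e₁` elsewhere. -/
noncomputable def thAux (b : ℕ) (s : Fin 3) (p q : ℕ) : ⨂[ℂ] _ : Fin b, (Fin 3 → ℂ) :=
  ⨂ₜ[ℂ] i : Fin b, if (i : ℕ) = p ∨ (i : ℕ) = q then eV3 s else eV3 0

lemma thAux_symm (b : ℕ) (s : Fin 3) (p q : ℕ) : thAux b s p q = thAux b s q p := by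
  unfold thAux; congr 1; funext i; exact if_congr or_comm rfl rfl

lemma insertTheta_eq (b : ℕ) (p q : ℕ) :
    insertTheta b p q = (⨂ₜ[ℂ] _ : Fin b, eV3 0) - thAux b 1 p q - thAux b 2 p q := by
  unfold insertTheta thAux
  simp only [ite_self]

lemma insertTheta_symm (b : ℕ) (p q : ℕ) : insertTheta b p q = insertTheta b q p := by
  rw [insertTheta_eq, insertTheta_eq, thAux_symm, thAux_symm b 2]

lemma upd_eq_thAux (b : ℕ) (s : Fin 3) (j k : Fin b) :
    PiTensorProduct.tprod ℂ
      (Function.update (Function.update (fun _ : Fin b => eV3 0) j (eV3 s)) k (eV3 s))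
      = thAux b s j k := by
  unfold thAux
  congr 1
  funext i
  rcases eq_or_ne i k with rfl | hik
  · simp
  · rcases eq_or_ne i j with rfl | hij
    · simp [Function.update_of_ne hik]
    · have h1 : (i : ℕ) ≠ (j : ℕ) := fun h => hij (Fin.ext h)
      have h2 : (i : ℕ) ≠ (k : ℕ) := fun h => hik (Fin.ext h)
      simp [Function.update_of_ne hik, Function.update_of_ne hij, h1, h2]

lemma rhs_reindex (b : ℕ) :
    (∑ j ∈ Finset.Icc 1 b, ∑ k ∈ Finset.Icc 1 (b - 1),
      (if j ≤ k then insertTheta b (j - 1) k else insertTheta b (k - 1) (j - 1)))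
    = ∑ j : Fin b, ∑ k ∈ Finset.univ.erase j, insertTheta b (j : ℕ) (k : ℕ) := by
  rw [← Finset.sum_product', Finset.sum_sigma' (Finset.univ : Finset (Fin b))
    (fun j => Finset.univ.erase j) (fun j k => insertTheta b (j : ℕ) (k : ℕ))]
  refine Finset.sum_bij'
    (i := fun x hx => ⟨⟨x.1 - 1, by
        simp only [Finset.mem_product, Finset.mem_Icc] at hx; omega⟩,
      ⟨if x.1 ≤ x.2 then x.2 else x.2 - 1, by
        simp only [Finset.mem_product, Finset.mem_Icc] at hx; split <;> omega⟩⟩)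
    (j := fun y hy => ((y.1 : ℕ) + 1, if (y.1 : ℕ) < (y.2 : ℕ) then (y.2 : ℕ) else (y.2 : ℕ) + 1))
    ?_ ?_ ?_ ?_ ?_
  · intro x hx
    have hx' := hx
    simp only [Finset.mem_product, Finset.mem_Icc] at hx'
    simp only [Finset.mem_sigma, Finset.mem_univ, Finset.mem_erase, true_and, and_true]
    intro h
    have := congrArg Fin.val h
    simp only at this
    split at this <;> omega
  · intro y hy
    simp only [Finset.mem_sigma, Finset.mem_univ, Finset.mem_erase, true_and, and_true] at hy
    have hne : (y.2 : ℕ) ≠ (y.1 : ℕ) := fun h => hy (Fin.ext h)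
    have h1 : (y.1 : ℕ) < b := y.1.isLt
    have h2 : (y.2 : ℕ) < b := y.2.isLt
    simp only [Finset.mem_product, Finset.mem_Icc]
    refine ⟨by omega, ?_⟩
    split <;> omega
  · intro x hx
    simp only [Finset.mem_product, Finset.mem_Icc] at hx
    obtain ⟨⟨hj1, hj2⟩, hk1, hk2⟩ := hx
    have hfst : (x.1 - 1) + 1 = x.1 := by omega
    refine Prod.ext hfst ?_
    simp only
    by_cases h : x.1 ≤ x.2
    · simp only [h, if_true]
      rw [if_pos (by omega)]
    · simp only [h, if_false]
      rw [if_neg (by omega)]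
      omega
  · intro y hy
    simp only [Finset.mem_sigma, Finset.mem_univ, Finset.mem_erase, true_and, and_true] at hy
    have hne : (y.2 : ℕ) ≠ (y.1 : ℕ) := fun h => hy (Fin.ext h)
    have h1 : (y.1 : ℕ) < b := y.1.isLt
    have h2 : (y.2 : ℕ) < b := y.2.isLt
    obtain ⟨a, c⟩ := y
    simp only at hne h1 h2 ⊢
    by_cases h : (a : ℕ) < (c : ℕ)
    · simp only [h, if_true]
      have hcond : (a : ℕ) + 1 ≤ (c : ℕ) := by omega
      refine Sigma.ext (Fin.ext (by simp)) ?_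
      exact heq_of_eq (Fin.ext (by simp [hcond]))
    · simp only [h, if_false]
      have hcond : ¬ ((a : ℕ) + 1 ≤ (c : ℕ) + 1) := by omega
      refine Sigma.ext (Fin.ext (by simp)) ?_
      exact heq_of_eq (Fin.ext (by simp [hcond]))
  · intro x hx
    simp only [Finset.mem_product, Finset.mem_Icc] at hx
    by_cases h : x.1 ≤ x.2
    · simp only [h, if_true]
    · simp only [h, if_false]
      exact insertTheta_symm b (x.2 - 1) (x.1 - 1)

/-- `D₊(D₋(e₁^{⊗b})) = b(b+1)·e₁^{⊗b} − Σ_{j=1}^{b} Σ_{k=1}^{b−1} A_{jk}(e₁^{⊗(b−2)})`,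
where `A_{jk}` inserts `θ` at the 1-indexed positions `(j, k+1)` if `j ≤ k` and `(k, j)` if
`k < j`. -/
theorem derivExt_plus_minus_pow (b : ℕ) :
    derivExt b dPlusV3 (derivExt b dMinusV3 (⨂ₜ[ℂ] _ : Fin b, eV3 0)) =
      ((b * (b + 1) : ℕ) : ℂ) • (⨂ₜ[ℂ] _ : Fin b, eV3 0) -
        ∑ j ∈ Finset.Icc 1 b, ∑ k ∈ Finset.Icc 1 (b - 1),
          (if j ≤ k then insertTheta b (j - 1) k else insertTheta b (k - 1) (j - 1)) := by
  classical
  set c : Fin b → (Fin 3 → ℂ) := fun _ => eV3 0 with hc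
  set E : ⨂[ℂ] _ : Fin b, (Fin 3 → ℂ) := ⨂ₜ[ℂ] _ : Fin b, eV3 0 with hE
  set m : Fin 3 → ℂ := eV3 1 - Complex.I • eV3 2 with hm
  -- step 1 : D₋ of e₁^{⊗b}
  have h1 : derivExt b dMinusV3 E
      = ∑ j : Fin b, PiTensorProduct.tprod ℂ (Function.update c j m) := by
    rw [hE, derivExt_tprod]
    refine Finset.sum_congr rfl fun j _ => ?_
    simp only [dMinus_e0, hm, hc]
  -- step 2 : D₊ of each summand
  have h2 : ∀ j : Fin b, derivExt b dPlusV3 (PiTensorProduct.tprod ℂ (Function.update c j m))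
      = (2 : ℂ) • E + ∑ k ∈ Finset.univ.erase j,
          PiTensorProduct.tprod ℂ
            (Function.update (Function.update c j m) k (eV3 1 + Complex.I • eV3 2)) := by
    intro j
    rw [derivExt_tprod, ← Finset.add_sum_erase _ _ (Finset.mem_univ j)]
    congr 1
    · rw [Function.update_self, Function.update_idem, dPlus_m,
        MultilinearMap.map_update_smul]
      congr 1
      rw [show Function.update c j (eV3 0) = c from Function.update_eq_self j c]
    · refine Finset.sum_congr rfl fun k hk => ?_
      have hkj : k ≠ j := (Finset.mem_erase.mp hk).1
      rw [Function.update_of_ne hkj]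
      simp only [hc, dPlus_e0]
  -- expansion of the off-diagonal terms
  have hT : ∀ j k : Fin b, j ≠ k →
      PiTensorProduct.tprod ℂ
        (Function.update (Function.update c j m) k (eV3 1 + Complex.I • eV3 2))
      = (thAux b 1 (j : ℕ) (k : ℕ) + thAux b 2 (j : ℕ) (k : ℕ))
          + Complex.I • PiTensorProduct.tprod ℂ
              (Function.update (Function.update c j (eV3 1)) k (eV3 2))
          - Complex.I • PiTensorProduct.tprod ℂ
              (Function.update (Function.update c j (eV3 2)) k (eV3 1)) := by
    intro j k hjk
    rw [hm, MultilinearMap.map_update_add, MultilinearMap.map_update_smul,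
      Function.update_comm hjk (eV3 1 - Complex.I • eV3 2) (eV3 1) c,
      Function.update_comm hjk (eV3 1 - Complex.I • eV3 2) (eV3 2) c,
      MultilinearMap.map_update_sub, MultilinearMap.map_update_sub,
      MultilinearMap.map_update_smul, MultilinearMap.map_update_smul,
      Function.update_comm hjk.symm (eV3 1) (eV3 1) c,
      Function.update_comm hjk.symm (eV3 1) (eV3 2) c,
      Function.update_comm hjk.symm (eV3 2) (eV3 1) c,
      Function.update_comm hjk.symm (eV3 2) (eV3 2) c,
      upd_eq_thAux b 1 j k, upd_eq_thAux b 2 j k]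
    rw [smul_sub, smul_smul, Complex.I_mul_I, neg_one_smul]
    abel
  -- the cancellation of the cross terms
  have hcancel :
      (∑ j : Fin b, ∑ k ∈ Finset.univ.erase j,
        PiTensorProduct.tprod ℂ
          (Function.update (Function.update c j (eV3 1)) k (eV3 2)))
      = ∑ j : Fin b, ∑ k ∈ Finset.univ.erase j,
          PiTensorProduct.tprod ℂ
            (Function.update (Function.update c j (eV3 2)) k (eV3 1)) := by
    rw [Finset.sum_comm' (s' := fun k : Fin b => Finset.univ.erase k)
      (t' := (Finset.univ : Finset (Fin b)))
      (fun x y => by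
        simp only [Finset.mem_univ, Finset.mem_erase, true_and, and_true]
        exact ⟨fun h => h.symm, fun h => h.symm⟩)]
    refine Finset.sum_congr rfl fun k _ => Finset.sum_congr rfl fun j hj => ?_
    have hjk : j ≠ k := (Finset.mem_erase.mp hj).1
    rw [Function.update_comm hjk (eV3 1) (eV3 2) c]
  -- main computation of the LHS
  rw [h1, map_sum]
  simp only [h2]
  rw [Finset.sum_add_distrib, Finset.sum_const, Finset.card_univ, Fintype.card_fin]
  have hoff : (∑ j : Fin b, ∑ k ∈ Finset.univ.erase j,
      PiTensorProduct.tprod ℂ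
        (Function.update (Function.update c j m) k (eV3 1 + Complex.I • eV3 2)))
      = ∑ j : Fin b, ∑ k ∈ Finset.univ.erase j,
          (thAux b 1 (j : ℕ) (k : ℕ) + thAux b 2 (j : ℕ) (k : ℕ)) := by
    have expand : ∀ j : Fin b, ∀ k ∈ Finset.univ.erase j,
        PiTensorProduct.tprod ℂ
          (Function.update (Function.update c j m) k (eV3 1 + Complex.I • eV3 2))
        = (thAux b 1 (j : ℕ) (k : ℕ) + thAux b 2 (j : ℕ) (k : ℕ))
            + Complex.I • PiTensorProduct.tprod ℂ
                (Function.update (Function.update c j (eV3 1)) k (eV3 2))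
            - Complex.I • PiTensorProduct.tprod ℂ
                (Function.update (Function.update c j (eV3 2)) k (eV3 1)) := by
      intro j k hk
      exact hT j k (Ne.symm (Finset.mem_erase.mp hk).1)
    calc
      _ = ∑ j : Fin b, ∑ k ∈ Finset.univ.erase j,
          ((thAux b 1 (j : ℕ) (k : ℕ) + thAux b 2 (j : ℕ) (k : ℕ))
            + Complex.I • PiTensorProduct.tprod ℂ
                (Function.update (Function.update c j (eV3 1)) k (eV3 2))
            - Complex.I • PiTensorProduct.tprod ℂ
                (Function.update (Function.update c j (eV3 2)) k (eV3 1))) :=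
        Finset.sum_congr rfl fun j _ => Finset.sum_congr rfl fun k hk => expand j k hk
      _ = (∑ j : Fin b, ∑ k ∈ Finset.univ.erase j,
            (thAux b 1 (j : ℕ) (k : ℕ) + thAux b 2 (j : ℕ) (k : ℕ)))
          + Complex.I • (∑ j : Fin b, ∑ k ∈ Finset.univ.erase j,
              PiTensorProduct.tprod ℂ
                (Function.update (Function.update c j (eV3 1)) k (eV3 2)))
          - Complex.I • (∑ j : Fin b, ∑ k ∈ Finset.univ.erase j,
              PiTensorProduct.tprod ℂ
                (Function.update (Function.update c j (eV3 2)) k (eV3 1))) := by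
        simp only [Finset.sum_sub_distrib, Finset.sum_add_distrib, Finset.smul_sum]
      _ = _ := by rw [hcancel]; abel
  rw [hoff, rhs_reindex]
  -- now both sides are in terms of E and the thAux sums
  have hins : ∀ j : Fin b, ∀ k ∈ Finset.univ.erase j,
      insertTheta b (j : ℕ) (k : ℕ)
        = E - thAux b 1 (j : ℕ) (k : ℕ) - thAux b 2 (j : ℕ) (k : ℕ) := fun j k _ =>
    insertTheta_eq b j k
  rw [Finset.sum_congr rfl fun j (_ : j ∈ Finset.univ) =>
    Finset.sum_congr rfl fun k hk => hins j k hk]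
  have card_erase : ∀ j : Fin b, (Finset.univ.erase j).card = b - 1 := fun j => by
    rw [Finset.card_erase_of_mem (Finset.mem_univ j), Finset.card_univ, Fintype.card_fin]
  simp only [Finset.sum_sub_distrib, Finset.sum_const, card_erase, Finset.card_univ,
    Fintype.card_fin]
  -- remaining: pure abelian-group + scalar arithmetic
  have hnat : b * (b + 1) = 2 * b + b * (b - 1) := by
    cases b with
    | zero => rfl
    | succ n => simp only [Nat.succ_sub_one]; ring
  have hsmul : ((b * (b + 1) : ℕ) : ℂ) • E
      = b • ((2 : ℂ) • E) + (b * (b - 1)) • E := by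
    rw [hnat]
    push_cast
    rw [add_smul]
    congr 1
    · rw [← Nat.cast_smul_eq_nsmul ℂ b ((2:ℂ) • E), smul_smul]
      ring_nf
    · rw [← Nat.cast_smul_eq_nsmul ℂ (b * (b - 1)) E]
      push_cast
      ring_nf
  rw [hsmul, ← smul_smul b (b - 1) E]
  simp only [Finset.sum_add_distrib]
  abel
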